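/- If some feasible specification of D has edge weight a_{m,w} ≥ 0 for every potential pair (m,w) ∈ M × W, then there exists a utility profile (continuous, nondecreasing, and concave utility functions for all individuals) such that, relative to this specification, no potential pair (m,w) ∈ M × W is blocking at disposable income y_{m,w}. -/

import Mathlib

open Finset

noncomputable section

/-- Euclidean dot product of two vectors in `ℝ^k`. -/
def dotp {k : ℕ} (x y : Fin k → ℝ) : ℝ := ∑ j, x j * y j

/-- The nonnegative orthant `ℝ^n_{≥0} × ℝ^N_{≥0}`. -/
def Orthant (n N : ℕ) : Set ((Fin n → ℝ) × (Fin N → ℝ)) := {x | 0 ≤ x.1 ∧ 0 ≤ x.2}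

/-- A dataset: prices and incomes for all potential pairs, and aggregate private and
public consumption for all observed couples `(m, σ m)`. -/
structure Dataset (n N : ℕ) (M W : Type) where
  p : M → W → Fin n → ℝ           -- private-good prices for potential pair (m,w)
  PP : M → W → Fin N → ℝ          -- public-good prices for potential pair (m,w)
  y : M → W → ℝ                   -- income of potential pair (m,w)
  q : M → Fin n → ℝ               -- aggregate private consumption of couple (m, σ m)
  Q : M → Fin N → ℝ               -- public consumption of couple (m, σ m)
  p_pos : ∀ m w j, 0 < p m w j
  PP_pos : ∀ m w J, 0 < PP m w J
  y_pos : ∀ m w, 0 < y m w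
  q_nonneg : ∀ m j, 0 ≤ q m j
  Q_nonneg : ∀ m J, 0 ≤ Q m J

/-- A feasible specification of a dataset: private shares for each observed couple and
Lindahl splits of the public-good prices for each potential pair. -/
structure Spec {n N : ℕ} {M W : Type} (D : Dataset n N M W) where
  q1 : M → Fin n → ℝ              -- man's private share in couple (m, σ m)
  q2 : M → Fin n → ℝ              -- woman σ m's private share in couple (m, σ m)
  P1 : M → W → Fin N → ℝ          -- man's Lindahl price for potential pair (m,w)
  P2 : M → W → Fin N → ℝ          -- woman's Lindahl price for potential pair (m,w)
  q1_nonneg : ∀ m j, 0 ≤ q1 m j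
  q2_nonneg : ∀ m j, 0 ≤ q2 m j
  q_add : ∀ m, q1 m + q2 m = D.q m
  P1_pos : ∀ m w J, 0 < P1 m w J
  P2_pos : ∀ m w J, 0 < P2 m w J
  P_add : ∀ m w, P1 m w + P2 m w = D.PP m w

/-- Edge weight `a_{m,w}` of a feasible specification. -/
def edge {n N : ℕ} {M W : Type} (σ : M ≃ W) (D : Dataset n N M W) (F : Spec D)
    (m : M) (w : W) : ℝ :=
  dotp (D.p m w) (F.q1 m + F.q2 (σ.symm w)) + dotp (F.P1 m w) (D.Q m)
    + dotp (F.P2 m w) (D.Q (σ.symm w)) - D.y m w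

/-- `IsRePath len ms`: `ms 0, …, ms (len-1)` is a path of remarriages:
at least two entries, the first `len - 1` entries pairwise distinct, and the last
`len - 1` entries pairwise distinct. -/
def IsRePath {M : Type} (len : ℕ) (ms : ℕ → M) : Prop :=
  2 ≤ len ∧
  (∀ i j, i < len - 1 → j < len - 1 → ms i = ms j → i = j) ∧
  (∀ i j, 1 ≤ i → i < len → 1 ≤ j → j < len → ms i = ms j → i = j)

/-- A path of remarriages is permissible if it is a cycle or neither endpoint
is a committed man. -/
def PermissiblePath {M : Type} (V : Set M) (len : ℕ) (ms : ℕ → M) : Prop :=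
  ms 0 = ms (len - 1) ∨ (ms 0 ∉ V ∧ ms (len - 1) ∉ V)

/-- Path consistency: no permissible path of remarriages has all edge weights ≤ 0
with at least one strict. -/
def PathConsistent {n N : ℕ} {M W : Type} (σ : M ≃ W) (V : Set M)
    (D : Dataset n N M W) (F : Spec D) : Prop :=
  ¬ ∃ (len : ℕ) (ms : ℕ → M), IsRePath len ms ∧ PermissiblePath V len ms ∧
      (∀ j < len - 1, edge σ D F (ms j) (σ (ms (j + 1))) ≤ 0) ∧
      (∃ j < len - 1, edge σ D F (ms j) (σ (ms (j + 1))) < 0)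

/-- Path monotonicity: no permissible path of remarriages has strictly negative
total edge weight. -/
def PathMonotone {n N : ℕ} {M W : Type} (σ : M ≃ W) (V : Set M)
    (D : Dataset n N M W) (F : Spec D) : Prop :=
  ¬ ∃ (len : ℕ) (ms : ℕ → M), IsRePath len ms ∧ PermissiblePath V len ms ∧
      (∑ j ∈ Finset.range (len - 1), edge σ D F (ms j) (σ (ms (j + 1)))) < 0

/-- A utility profile: a continuous, nondecreasing, concave utility on the
nonnegative orthant for every individual. -/
structure UtilProfile (n N : ℕ) (M W : Type) where
  u : M ⊕ W → ((Fin n → ℝ) × (Fin N → ℝ)) → ℝ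
  cont : ∀ i, ContinuousOn (u i) (Orthant n N)
  mono : ∀ i, MonotoneOn (u i) (Orthant n N)
  conc : ∀ i, ConcaveOn ℝ (Orthant n N) (u i)

/-- The pair `(m,w)` is weakly blocking at disposable income `yhat`. -/
def WeakBlock {n N : ℕ} {M W : Type} (σ : M ≃ W) (D : Dataset n N M W) (F : Spec D)
    (U : UtilProfile n N M W) (m : M) (w : W) (yhat : ℝ) : Prop :=
  ∃ (x1 x2 : Fin n → ℝ) (X : Fin N → ℝ),
    (∀ j, 0 ≤ x1 j) ∧ (∀ j, 0 ≤ x2 j) ∧ (∀ J, 0 ≤ X J) ∧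
    dotp (D.p m w) (x1 + x2) + dotp (D.PP m w) X ≤ yhat ∧
    U.u (Sum.inl m) (F.q1 m, D.Q m) ≤ U.u (Sum.inl m) (x1, X) ∧
    U.u (Sum.inr w) (F.q2 (σ.symm w), D.Q (σ.symm w)) ≤ U.u (Sum.inr w) (x2, X)

/-- The pair `(m,w)` is blocking at disposable income `yhat`: weakly blocking with at
least one of the two utility inequalities strict. -/
def Block {n N : ℕ} {M W : Type} (σ : M ≃ W) (D : Dataset n N M W) (F : Spec D)
    (U : UtilProfile n N M W) (m : M) (w : W) (yhat : ℝ) : Prop :=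
  ∃ (x1 x2 : Fin n → ℝ) (X : Fin N → ℝ),
    (∀ j, 0 ≤ x1 j) ∧ (∀ j, 0 ≤ x2 j) ∧ (∀ J, 0 ≤ X J) ∧
    dotp (D.p m w) (x1 + x2) + dotp (D.PP m w) X ≤ yhat ∧
    U.u (Sum.inl m) (F.q1 m, D.Q m) ≤ U.u (Sum.inl m) (x1, X) ∧
    U.u (Sum.inr w) (F.q2 (σ.symm w), D.Q (σ.symm w)) ≤ U.u (Sum.inr w) (x2, X) ∧
    (U.u (Sum.inl m) (F.q1 m, D.Q m) < U.u (Sum.inl m) (x1, X) ∨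
     U.u (Sum.inr w) (F.q2 (σ.symm w), D.Q (σ.symm w)) < U.u (Sum.inr w) (x2, X))

/-- A coalition: a nonempty set `S` of individuals together with a rematching `τ`
that is a bijection between the men of `S` and the women of `S`. -/
structure Coalition (M W : Type) where
  S : Set (M ⊕ W)
  nonempty : S.Nonempty
  τ : M → W
  bij : Set.BijOn τ {m | Sum.inl m ∈ S} {w | Sum.inr w ∈ S}

/-- A coalition is permissible if every member whose observed couple is committed has
their spouse in the coalition. -/
def Coalition.PermissibleC {M W : Type} (C : Coalition M W) (σ : M ≃ W) (V : Set M) :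
    Prop :=
  (∀ m, Sum.inl m ∈ C.S → m ∈ V → Sum.inr (σ m) ∈ C.S) ∧
  (∀ w, Sum.inr w ∈ C.S → σ.symm w ∈ V → Sum.inl (σ.symm w) ∈ C.S)

/-- A coalition blocks without transfers. -/
def Coalition.BlocksNT {n N : ℕ} {M W : Type} (C : Coalition M W) (σ : M ≃ W)
    (D : Dataset n N M W) (F : Spec D) (U : UtilProfile n N M W) : Prop :=
  (∀ m, Sum.inl m ∈ C.S → WeakBlock σ D F U m (C.τ m) (D.y m (C.τ m))) ∧
  (∃ m, Sum.inl m ∈ C.S ∧ Block σ D F U m (C.τ m) (D.y m (C.τ m)))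

/-- A coalition blocks with transfers. -/
def Coalition.BlocksT {n N : ℕ} {M W : Type} (C : Coalition M W) (σ : M ≃ W)
    (D : Dataset n N M W) (F : Spec D) (U : UtilProfile n N M W) : Prop :=
  ∃ t : M → ℝ,
    (∀ m, (Sum.inl m ∉ C.S ∨ Sum.inr (σ m) ∉ C.S) → t m = 0) ∧
    (∀ m, Sum.inl m ∈ C.S →
      WeakBlock σ D F U m (C.τ m) (D.y m (C.τ m) - t m + t (σ.symm (C.τ m)))) ∧
    (∃ m, Sum.inl m ∈ C.S ∧
      Block σ D F U m (C.τ m) (D.y m (C.τ m) - t m + t (σ.symm (C.τ m))))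

/-- Rationalizability with core without transfers. -/
def RationalizableNT {n N : ℕ} {M W : Type} (σ : M ≃ W) (V : Set M)
    (D : Dataset n N M W) : Prop :=
  ∃ (U : UtilProfile n N M W) (F : Spec D),
    ∀ C : Coalition M W, C.PermissibleC σ V → ¬ C.BlocksNT σ D F U

/-- Rationalizability with core with transfers. -/
def RationalizableT {n N : ℕ} {M W : Type} (σ : M ≃ W) (V : Set M)
    (D : Dataset n N M W) : Prop :=
  ∃ (U : UtilProfile n N M W) (F : Spec D),
    ∀ C : Coalition M W, C.PermissibleC σ V → ¬ C.BlocksT σ D F U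


/-- Auxiliary: dot product with a sum on the left. -/
lemma dotp_add_left {k : ℕ} (x y z : Fin k → ℝ) :
    dotp (x + y) z = dotp x z + dotp y z := by
  simp [dotp, add_mul, Finset.sum_add_distrib]

lemma dotp_sub {k : ℕ} (x y z : Fin k → ℝ) :
    dotp x (y - z) = dotp x y - dotp x z := by
  simp [dotp, mul_sub, Finset.sum_sub_distrib]

lemma dotp_mono {k : ℕ} {x y z : Fin k → ℝ} (hx : ∀ j, 0 ≤ x j) (h : y ≤ z) :
    dotp x y ≤ dotp x z :=
  Finset.sum_le_sum fun j _ => mul_le_mul_of_nonneg_left (h j) (hx j)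

lemma dotp_cont {k : ℕ} (x : Fin k → ℝ) : Continuous (fun y : Fin k → ℝ => dotp x y) := by
  unfold dotp
  exact continuous_finset_sum _ fun j _ => (continuous_const.mul (continuous_apply j))

lemma dotp_add {k : ℕ} (x y z : Fin k → ℝ) :
    dotp x (y + z) = dotp x y + dotp x z := by
  simp [dotp, mul_add, Finset.sum_add_distrib]

/-- The affine "Afriat" building block. -/
def afr {n N : ℕ} (p : Fin n → ℝ) (P : Fin N → ℝ) (q : Fin n → ℝ) (Q : Fin N → ℝ)
    (z : (Fin n → ℝ) × (Fin N → ℝ)) : ℝ :=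
  dotp p (z.1 - q) + dotp P (z.2 - Q)

lemma dotp_smul' {k : ℕ} (x : Fin k → ℝ) (c : ℝ) (y : Fin k → ℝ) :
    dotp x (c • y) = c * dotp x y := by
  simp only [dotp, Pi.smul_apply, smul_eq_mul, Finset.mul_sum]
  exact Finset.sum_congr rfl fun j _ => by ring

lemma afr_affine {n N : ℕ} (p : Fin n → ℝ) (P : Fin N → ℝ) (q : Fin n → ℝ) (Q : Fin N → ℝ)
    (z z' : (Fin n → ℝ) × (Fin N → ℝ)) {a b : ℝ} (hab : a + b = 1) :
    afr p P q Q (a • z + b • z') = a * afr p P q Q z + b * afr p P q Q z' := by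
  have h1 : (a • z + b • z').1 = a • z.1 + b • z'.1 := rfl
  have h2 : (a • z + b • z').2 = a • z.2 + b • z'.2 := rfl
  have e1 : dotp p ((a • z + b • z').1 - q) = a * dotp p (z.1 - q) + b * dotp p (z'.1 - q) := by
    rw [h1]
    have hc : a • q + b • q = q := by rw [← add_smul, hab, one_smul]
    have : a • z.1 + b • z'.1 - q = a • (z.1 - q) + b • (z'.1 - q) := by
      conv_lhs => rw [← hc]
      module
    rw [this, dotp_add, dotp_smul', dotp_smul']
  have e2 : dotp P ((a • z + b • z').2 - Q) = a * dotp P (z.2 - Q) + b * dotp P (z'.2 - Q) := by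
    rw [h2]
    have hc : a • Q + b • Q = Q := by rw [← add_smul, hab, one_smul]
    have : a • z.2 + b • z'.2 - Q = a • (z.2 - Q) + b • (z'.2 - Q) := by
      conv_lhs => rw [← hc]
      module
    rw [this, dotp_add, dotp_smul', dotp_smul']
  simp only [afr, e1, e2]; ring

lemma afr_cont {n N : ℕ} (p : Fin n → ℝ) (P : Fin N → ℝ) (q : Fin n → ℝ) (Q : Fin N → ℝ) :
    Continuous (afr p P q Q) := by
  unfold afr
  exact ((dotp_cont p).comp (continuous_fst.sub continuous_const)).add
    ((dotp_cont P).comp (continuous_snd.sub continuous_const))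

lemma afr_mono {n N : ℕ} {p : Fin n → ℝ} {P : Fin N → ℝ} (q : Fin n → ℝ) (Q : Fin N → ℝ)
    (hp : ∀ j, 0 ≤ p j) (hP : ∀ J, 0 ≤ P J) : Monotone (afr p P q Q) := by
  intro z z' h
  exact add_le_add (dotp_mono hp (sub_le_sub_right h.1 q)) (dotp_mono hP (sub_le_sub_right h.2 Q))

lemma afr_expand {n N : ℕ} (p : Fin n → ℝ) (P : Fin N → ℝ) (q : Fin n → ℝ) (Q : Fin N → ℝ)
    (z : (Fin n → ℝ) × (Fin N → ℝ)) :
    afr p P q Q z = dotp p z.1 + dotp P z.2 - (dotp p q + dotp P Q) := by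
  simp only [afr, dotp_sub]; ring

/-- if a feasible specification has all edge weights nonnegative, then
there is a utility profile under which no potential pair is blocking. -/
theorem nonneg_edges_imp_no_blocking_pair
    {n N : ℕ} (hn : 1 ≤ n) (hN : 1 ≤ N)
    {M W : Type} [Fintype M] [Fintype W] [Nonempty M] [Nonempty W]
    (σ : M ≃ W) (D : Dataset n N M W) (F : Spec D)
    (hF : ∀ (m : M) (w : W), 0 ≤ edge σ D F m w) :
    ∃ U : UtilProfile n N M W, ∀ (m : M) (w : W), ¬ Block σ D F U m w (D.y m w) := by
  classical
  -- utility of a man: min of affine Afriat functions over women; symmetric for women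
  set u : M ⊕ W → ((Fin n → ℝ) × (Fin N → ℝ)) → ℝ := fun i z =>
    match i with
    | Sum.inl m => Finset.univ.inf' Finset.univ_nonempty
        (fun w' : W => afr (D.p m w') (F.P1 m w') (F.q1 m) (D.Q m) z)
    | Sum.inr w => Finset.univ.inf' Finset.univ_nonempty
        (fun m' : M => afr (D.p m' w) (F.P2 m' w) (F.q2 (σ.symm w)) (D.Q (σ.symm w)) z)
    with hu
  have hconvex : Convex ℝ (Orthant n N) := by
    intro z hz z' hz' a b ha hb hab
    constructor
    · intro j
      simpa using add_nonneg (smul_nonneg ha (hz.1 j)) (smul_nonneg hb (hz'.1 j))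
    · intro J
      simpa using add_nonneg (smul_nonneg ha (hz.2 J)) (smul_nonneg hb (hz'.2 J))
  have hcont : ∀ i, Continuous (u i) := by
    rintro (m | w)
    · exact Continuous.finset_inf'_apply _ fun w' _ => afr_cont _ _ _ _
    · exact Continuous.finset_inf'_apply _ fun m' _ => afr_cont _ _ _ _
  have hmono : ∀ i, Monotone (u i) := by
    rintro (m | w) <;> intro z z' h <;>
      refine Finset.le_inf' _ _ fun k _ => le_trans (Finset.inf'_le _ (Finset.mem_univ k)) ?_
    · exact afr_mono _ _ (fun j => (D.p_pos m k j).le) (fun J => (F.P1_pos m k J).le) h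
    · exact afr_mono _ _ (fun j => (D.p_pos k w j).le) (fun J => (F.P2_pos k w J).le) h
  have hconc : ∀ i, ConcaveOn ℝ (Orthant n N) (u i) := by
    intro i
    refine ⟨hconvex, fun z _ z' _ a b ha hb hab => ?_⟩
    rcases i with m | w <;>
      refine Finset.le_inf' _ _ fun k _ => ?_ <;>
      rw [afr_affine _ _ _ _ _ _ hab] <;> simp only [smul_eq_mul] <;>
      exact add_le_add
        (mul_le_mul_of_nonneg_left (Finset.inf'_le _ (Finset.mem_univ k)) ha)
        (mul_le_mul_of_nonneg_left (Finset.inf'_le _ (Finset.mem_univ k)) hb)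
  refine ⟨⟨u, fun i => (hcont i).continuousOn, fun i => (hmono i).monotoneOn _,
    hconc⟩, ?_⟩
  rintro m w ⟨x1, x2, X, hx1, hx2, hX, hbud, hm, hw, hstrict⟩
  simp only at hm hw hstrict
  set m' := σ.symm w with hm'
  -- utilities at the observed bundles are 0
  have hum0 : u (Sum.inl m) (F.q1 m, D.Q m) = 0 := by
    have : (fun w' : W => afr (D.p m w') (F.P1 m w') (F.q1 m) (D.Q m) (F.q1 m, D.Q m))
        = fun _ => (0 : ℝ) := by
      funext w'; simp [afr, dotp]
    simp only [hu, this, Finset.inf'_const]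
  have huw0 : u (Sum.inr w) (F.q2 m', D.Q m') = 0 := by
    have : (fun k : M => afr (D.p k w) (F.P2 k w) (F.q2 m') (D.Q m') (F.q2 m', D.Q m'))
        = fun _ => (0 : ℝ) := by
      funext k; simp [afr, dotp]
    show Finset.univ.inf' Finset.univ_nonempty (fun k : M => afr (D.p k w) (F.P2 k w) (F.q2 m') (D.Q m') (F.q2 m', D.Q m')) = 0
    rw [this, Finset.inf'_const]
  -- the terms at (m, w)
  have hA : u (Sum.inl m) (x1, X) ≤ afr (D.p m w) (F.P1 m w) (F.q1 m) (D.Q m) (x1, X) := by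
    exact Finset.inf'_le
      (fun w' : W => afr (D.p m w') (F.P1 m w') (F.q1 m) (D.Q m) (x1, X)) (Finset.mem_univ w)
  have hB : u (Sum.inr w) (x2, X) ≤ afr (D.p m w) (F.P2 m w) (F.q2 m') (D.Q m') (x2, X) := by
    exact Finset.inf'_le
      (fun k : M => afr (D.p k w) (F.P2 k w) (F.q2 m') (D.Q m') (x2, X)) (Finset.mem_univ m)
  rw [hum0] at hm hstrict
  rw [huw0] at hw hstrict
  have hA0 : 0 ≤ afr (D.p m w) (F.P1 m w) (F.q1 m) (D.Q m) (x1, X) := le_trans hm hA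
  have hB0 : 0 ≤ afr (D.p m w) (F.P2 m w) (F.q2 m') (D.Q m') (x2, X) := le_trans hw hB
  have hAB : 0 < afr (D.p m w) (F.P1 m w) (F.q1 m) (D.Q m) (x1, X)
      + afr (D.p m w) (F.P2 m w) (F.q2 m') (D.Q m') (x2, X) := by
    rcases hstrict with h | h
    · have := lt_of_lt_of_le h hA
      linarith
    · have := lt_of_lt_of_le h hB
      linarith
  have hedge := hF m w
  rw [edge] at hedge
  rw [afr_expand, afr_expand] at hAB
  rw [dotp_add] at hedge hbud
  have hPP : dotp (D.PP m w) X = dotp (F.P1 m w) X + dotp (F.P2 m w) X := by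
    rw [← F.P_add m w, dotp_add_left]
  rw [hPP] at hbud
  simp only at hAB
  linarith
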